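/- Closed-loop minimality (controllability part): suppose (A,B) is controllable, (A,C) is observable, and the controller realization (A_K, B_K, C_K) is controllable, i.e., (A_K, B_K) is controllable. If additionally the pair formed by the closed-loop matrix A_cl = [[A, B·C_K],[B_K·C, A_K]] and input matrix B_cl = [[I, 0],[0, B_K]] fails the PBH controllability test at some λ, then there is a nonzero left eigenvector (x, ξ) of A_cl with xᵀ = 0 or ξᵀ·B_K = 0 leading to a contradiction; consequently (A_cl, B_cl) is controllable. -/

import Mathlib

open Matrix

/-- PBH controllability test: `(M,N)` is controllable iff every nonzero left eigenvector
`z` of `M` (over ℂ) satisfies `z·N ≠ 0`. -/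
def PBHControllable {k l : Type*} [Fintype k] [Fintype l]
    (M : Matrix k k ℝ) (N : Matrix k l ℝ) : Prop :=
  ∀ (μ : ℂ) (z : k → ℂ), z ≠ 0 → z ᵥ* (M.map Complex.ofReal) = μ • z →
    z ᵥ* (N.map Complex.ofReal) ≠ 0

/-- PBH observability test: `(M,C)` is observable iff every nonzero (right) eigenvector
`x` of `M` (over ℂ) satisfies `C·x ≠ 0`. -/
def PBHObservable {k p : Type*} [Fintype k] [Fintype p]
    (M : Matrix k k ℝ) (C : Matrix p k ℝ) : Prop :=
  ∀ (μ : ℂ) (x : k → ℂ), x ≠ 0 → (M.map Complex.ofReal) *ᵥ x = μ • x →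
    (C.map Complex.ofReal) *ᵥ x ≠ 0

/-- Closed-loop controllability: if the plant `(A,B)` is controllable, `(A,C)` is
observable, and the controller pair `(A_K, B_K)` is controllable, then the closed-loop
pair `(A_cl, B_cl)` with `A_cl = [[A, B·C_K],[B_K·C, A_K]]`, `B_cl = [[I,0],[0,B_K]]`
is controllable. -/
theorem closed_loop_controllable {n m p : ℕ}
    (A : Matrix (Fin n) (Fin n) ℝ) (B : Matrix (Fin n) (Fin m) ℝ)
    (C : Matrix (Fin p) (Fin n) ℝ)
    (AK : Matrix (Fin n) (Fin n) ℝ) (BK : Matrix (Fin n) (Fin p) ℝ)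
    (CK : Matrix (Fin m) (Fin n) ℝ)
    (hAB : PBHControllable A B) (hAC : PBHObservable A C)
    (hK : PBHControllable AK BK) :
    PBHControllable
      (Matrix.fromBlocks A (B * CK) (BK * C) AK)
      (Matrix.fromBlocks (1 : Matrix (Fin n) (Fin n) ℝ) 0 0 BK) := by
  intro μ z hz hev hzero
  set x := z ∘ Sum.inl with hx
  set ξ := z ∘ Sum.inr with hxi
  rw [Matrix.fromBlocks_map, Matrix.vecMul_fromBlocks] at hzero hev
  have hx0 : x = 0 := by
    funext i
    have := congrFun hzero (Sum.inl i)
    simpa [Matrix.map_one Complex.ofReal Complex.ofReal_zero Complex.ofReal_one, hx] using this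
  have hBK : ξ ᵥ* (BK.map Complex.ofReal) = 0 := by
    funext i
    have := congrFun hzero (Sum.inr i)
    simpa using this
  have hξ : ξ ≠ 0 := by
    intro h0
    apply hz
    funext i
    cases i with
    | inl i => exact congrFun hx0 i
    | inr i => exact congrFun h0 i
  have hevξ : ξ ᵥ* (AK.map Complex.ofReal) = μ • ξ := by
    funext i
    have := congrFun hev (Sum.inr i)
    rw [show z ∘ Sum.inl = x from rfl, show z ∘ Sum.inr = ξ from rfl, hx0] at this
    simpa [hxi] using this
  exact hK μ ξ hξ hevξ hBK
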